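/- Let E be a real Banach space and A an r_L-dense subset of E × E*. Then A − gra(−J) (Minkowski difference in E × E*) is dense in E × E* for the norm topology. -/

import Mathlib

open Pointwise Filter Topology Set

/-- `r_L(x, x*) = ½‖x‖² + ½‖x*‖² + ⟨x, x*⟩`. -/
noncomputable def rL {E : Type*} [NormedAddCommGroup E] [NormedSpace ℝ E]
    (x : E) (x' : StrongDual ℝ E) : ℝ :=
  1 / 2 * ‖x‖ ^ 2 + 1 / 2 * ‖x'‖ ^ 2 + x' x

/-- `A ⊆ E × E*` is `r_L`-dense: for every `(y, y*)`,
`inf_{(s,s*) ∈ A} r_L(s - y, s* - y*) = 0` (since `r_L ≥ 0`, this means for every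
`ε > 0` there is `(s, s*) ∈ A` with `r_L(s - y, s* - y*) < ε`). -/
def RLDense {E : Type*} [NormedAddCommGroup E] [NormedSpace ℝ E]
    (A : Set (E × StrongDual ℝ E)) : Prop :=
  ∀ (y : E) (y' : StrongDual ℝ E), ∀ ε > (0 : ℝ),
    ∃ p ∈ A, rL (p.1 - y) (p.2 - y') < ε

/-- The graph of `-J`: pairs `(x, x*)` with `-x* ∈ J(x)`. -/
def graNegJ (E : Type*) [NormedAddCommGroup E] [NormedSpace ℝ E] :
    Set (E × StrongDual ℝ E) :=
  {p | p.2 p.1 = -‖p.1‖ ^ 2 ∧ ‖p.2‖ = ‖p.1‖}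

theorem my_ekeland {E : Type*} [MetricSpace E] [CompleteSpace E]
    (f : E → ℝ) (hf : Continuous f) (c : ℝ) (hc : ∀ u, c ≤ f u)
    (x₀ : E) (ε δ : ℝ) (hδ : 0 < δ) (hx₀ : f x₀ < c + ε) :
    ∃ v : E, δ * dist v x₀ ≤ ε ∧ ∀ u, f v ≤ f u + δ * dist u v := by
  set S : E → Set E := fun w => {u | f u + δ * dist u w ≤ f w} with hS
  have hSelf : ∀ w, w ∈ S w := by intro w; simp [hS]
  have hbdd : ∀ w, BddBelow (f '' S w) := by
    intro w; exact ⟨c, by rintro r ⟨u, _, rfl⟩; exact hc u⟩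
  have exists_step : ∀ (n : ℕ) (w : E), ∃ u, u ∈ S w ∧
      f u < sInf (f '' S w) + (1/2 : ℝ)^n := by
    intro n w
    obtain ⟨r, ⟨u, hu, rfl⟩, hr⟩ := Real.lt_sInf_add_pos
      (Set.Nonempty.image f ⟨w, hSelf w⟩) (by positivity : (0:ℝ) < (1/2:ℝ)^n)
    exact ⟨u, hu, hr⟩
  choose F hF1 hF2 using exists_step
  set x : ℕ → E := fun n => Nat.rec x₀ (fun k xk => F k xk) n with hxdef
  have hx0 : x 0 = x₀ := rfl
  have hxs : ∀ n, x (n+1) = F n (x n) := fun n => rfl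
  have h1 : ∀ n, f (x (n+1)) + δ * dist (x (n+1)) (x n) ≤ f (x n) := by
    intro n; rw [hxs n]; exact (hF1 n (x n))
  have h2 : ∀ n, f (x (n+1)) < sInf (f '' S (x n)) + (1/2 : ℝ)^n := by
    intro n; rw [hxs n]; exact hF2 n (x n)
  have hanti : Antitone fun n => f (x n) := by
    apply antitone_nat_of_succ_le
    intro n
    have := h1 n
    have hd : 0 ≤ δ * dist (x (n+1)) (x n) := by positivity
    simp only [ge_iff_le]
    linarith
  have hmono : ∀ n m, n ≤ m → f (x m) + δ * dist (x m) (x n) ≤ f (x n) := by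
    intro n m hnm
    induction m, hnm using Nat.le_induction with
    | base => simp
    | succ m hnm ih =>
      have htri : dist (x (m+1)) (x n) ≤ dist (x (m+1)) (x m) + dist (x m) (x n) :=
        dist_triangle _ _ _
      have := h1 m
      nlinarith [mul_le_mul_of_nonneg_left htri hδ.le]
  set L : ℝ := ⨅ n, f (x n) with hLdef
  have hbb : BddBelow (Set.range fun n => f (x n)) :=
    ⟨c, by rintro r ⟨n, rfl⟩; exact hc _⟩
  have hL : Tendsto (fun n => f (x n)) atTop (𝓝 L) := tendsto_atTop_ciInf hanti hbb
  have hLle : ∀ n, L ≤ f (x n) := fun n => ciInf_le hbb n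
  have hcauchy : CauchySeq x := by
    apply cauchySeq_of_le_tendsto_0 (fun N => (f (x N) - L) / δ)
    · intro n m N hn hm
      rcases le_total n m with h | h
      · rw [dist_comm, le_div_iff₀ hδ]
        have h1 := hmono n m h
        have h2 := hanti hn
        have h3 := hLle m
        simp only at h2
        nlinarith
      · rw [le_div_iff₀ hδ]
        have h1 := hmono m n h
        have h2 := hanti hm
        have h3 := hLle n
        simp only at h2
        nlinarith
    · have : Tendsto (fun N => (f (x N) - L) / δ) atTop (𝓝 ((L - L) / δ)) :=
        (hL.sub tendsto_const_nhds).div_const δ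
      simpa using this
  obtain ⟨v, hv⟩ := cauchySeq_tendsto_of_complete hcauchy
  have hfv : f v = L := tendsto_nhds_unique ((hf.tendsto v).comp hv) hL
  have hdist : ∀ n, f v + δ * dist v (x n) ≤ f (x n) := by
    intro n
    have htend : Tendsto (fun m => f (x m) + δ * dist (x m) (x n)) atTop
        (𝓝 (f v + δ * dist v (x n))) := by
      refine Tendsto.add ((hf.tendsto v).comp hv) ?_
      exact Tendsto.const_mul δ (hv.dist tendsto_const_nhds)
    refine le_of_tendsto htend ?_
    filter_upwards [eventually_ge_atTop n] with m hm
    exact hmono n m hm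
  refine ⟨v, ?_, ?_⟩
  · have := hdist 0
    rw [hx0] at this
    have := hc v
    linarith
  · by_contra hcon
    push_neg at hcon
    obtain ⟨u, hu⟩ := hcon
    have huS : ∀ n, u ∈ S (x n) := by
      intro n
      have htri : dist u (x n) ≤ dist u v + dist v (x n) := dist_triangle _ _ _
      have h3 := hdist n
      show f u + δ * dist u (x n) ≤ f (x n)
      nlinarith [mul_le_mul_of_nonneg_left htri hδ.le]
    have hfvlt : ∀ n, f v < f u + (1/2 : ℝ)^n := by
      intro n
      have hinf : sInf (f '' S (x n)) ≤ f u := csInf_le (hbdd _) ⟨u, huS n, rfl⟩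
      have := h2 n
      have := hLle (n+1)
      rw [hfv]
      linarith
    have hdpos : 0 ≤ δ * dist u v := by positivity
    have hlt : f u < f v := by linarith
    obtain ⟨n, hn⟩ := exists_pow_lt_of_lt_one (by linarith : (0:ℝ) < f v - f u)
      (by norm_num : (1/2 : ℝ) < 1)
    have := hfvlt n
    linarith

theorem dualitymap_of_subgrad {E : Type*} [NormedAddCommGroup E] [NormedSpace ℝ E]
    (W : StrongDual ℝ E) (v : E)
    (hW : ∀ w, W w ≤ 1/2*‖v+w‖^2 - 1/2*‖v‖^2) : W v = ‖v‖^2 ∧ ‖W‖ = ‖v‖ := by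
  -- W v = ‖v‖²
  have hWv_ub : W v ≤ ‖v‖^2 := by
    apply le_of_forall_pos_le_add
    intro ε hε
    set η : ℝ := min 1 (ε/(‖v‖^2+1)) with hηdef
    have hη : 0 < η := lt_min one_pos (by positivity)
    have h1 := hW (η•v)
    have h2 : v + η•v = (1+η)•v := by rw [add_smul, one_smul]
    have h3 : ‖v + η•v‖ = (1+η)*‖v‖ := by
      rw [h2, norm_smul, Real.norm_eq_abs, abs_of_pos (by linarith)]
    rw [map_smul, smul_eq_mul, h3] at h1
    have h6 : η/2*‖v‖^2 ≤ ε := by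
      have h7 : η ≤ ε/(‖v‖^2+1) := min_le_right _ _
      rw [le_div_iff₀ (by positivity)] at h7
      nlinarith [norm_nonneg v]
    have h8 : η * W v ≤ η * (‖v‖^2 + ε) := by
      nlinarith [mul_le_mul_of_nonneg_left h6 hη.le]
    exact le_of_mul_le_mul_left h8 hη
  have hWv_lb : ‖v‖^2 ≤ W v := by
    apply le_of_forall_pos_le_add
    intro ε hε
    set η : ℝ := min 1 (ε/(‖v‖^2+1)) with hηdef
    have hη : 0 < η := lt_min one_pos (by positivity)
    have hη1 : η ≤ 1 := min_le_left _ _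
    have h1 := hW ((-η)•v)
    have h2 : v + (-η)•v = (1-η)•v := by rw [sub_smul, one_smul, neg_smul]; abel
    have h3 : ‖v + (-η)•v‖ = (1-η)*‖v‖ := by
      rw [h2, norm_smul, Real.norm_eq_abs, abs_of_nonneg (by linarith)]
    rw [map_smul, smul_eq_mul, h3] at h1
    have h6 : η/2*‖v‖^2 ≤ ε := by
      have h7 : η ≤ ε/(‖v‖^2+1) := min_le_right _ _
      rw [le_div_iff₀ (by positivity)] at h7
      nlinarith [norm_nonneg v]
    have h8 : η * ‖v‖^2 ≤ η * (W v + ε) := by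
      nlinarith [mul_le_mul_of_nonneg_left h6 hη.le]
    exact le_of_mul_le_mul_left h8 hη
  have hWv : W v = ‖v‖^2 := le_antisymm hWv_ub hWv_lb
  -- ‖W‖ = ‖v‖
  have hWle : ∀ w, W w ≤ ‖v‖*‖w‖ := by
    intro w
    apply le_of_forall_pos_le_add
    intro ε hε
    set t : ℝ := 2*ε/(‖w‖^2+1) with htdef
    have ht : 0 < t := by positivity
    have h1 := hW (t•w)
    have h3 : ‖v + t•w‖ ≤ ‖v‖ + t*‖w‖ := by
      calc ‖v + t•w‖ ≤ ‖v‖ + ‖t•w‖ := norm_add_le _ _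
        _ = ‖v‖ + t*‖w‖ := by rw [norm_smul, Real.norm_eq_abs, abs_of_pos ht]
    have h3' : ‖v + t•w‖^2 ≤ (‖v‖ + t*‖w‖)^2 :=
      pow_le_pow_left₀ (norm_nonneg _) h3 2
    rw [map_smul, smul_eq_mul] at h1
    have h6 : t*‖w‖^2/2 ≤ ε := by
      have h7 : t * (‖w‖^2+1) = 2*ε := by rw [htdef]; field_simp
      nlinarith [norm_nonneg w]
    have h8 : t * W w ≤ t * (‖v‖*‖w‖ + ε) := by
      nlinarith [mul_le_mul_of_nonneg_left h6 ht.le]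
    exact le_of_mul_le_mul_left h8 ht
  have hWnormle : ‖W‖ ≤ ‖v‖ := by
    apply ContinuousLinearMap.opNorm_le_bound _ (norm_nonneg v)
    intro w
    rw [Real.norm_eq_abs, abs_le]
    refine ⟨?_, hWle w⟩
    have := hWle (-w)
    rw [map_neg, norm_neg] at this
    linarith
  have hWnorm : ‖W‖ = ‖v‖ := by
    rcases eq_or_ne v 0 with rfl | hv
    · have h := hWnormle
      simp only [norm_zero] at h ⊢
      linarith [norm_nonneg W]
    · refine le_antisymm hWnormle ?_
      have h1 : W v ≤ ‖W‖*‖v‖ := by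
        calc W v ≤ |W v| := le_abs_self _
          _ = ‖W v‖ := (Real.norm_eq_abs _).symm
          _ ≤ ‖W‖*‖v‖ := W.le_opNorm v
      rw [hWv] at h1
      have hv' : 0 < ‖v‖ := norm_pos_iff.mpr hv
      nlinarith
  exact ⟨hWv, hWnorm⟩

theorem my_subgrad {E : Type*} [NormedAddCommGroup E] [NormedSpace ℝ E]
    (ψ : StrongDual ℝ E) (v : E) (δ : ℝ) (hδ : 0 ≤ δ)
    (hmin : ∀ u : E, 1/2*‖v‖^2 + ψ v ≤ 1/2*‖u‖^2 + ψ u + δ * ‖u - v‖) :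
    ∃ g : StrongDual ℝ E, g v = -‖v‖^2 ∧ ‖g‖ = ‖v‖ ∧ ‖ψ - g‖ ≤ δ := by
  set φ : E → ℝ := fun w => 1/2*‖v+w‖^2 - 1/2*‖v‖^2 + ψ w with hφdef
  have hφ0 : φ 0 = 0 := by simp [hφdef]
  have hφlb : ∀ w, -(δ*‖w‖) ≤ φ w := by
    intro w
    have h := hmin (v + w)
    rw [map_add, add_sub_cancel_left] at h
    simp only [hφdef]
    linarith
  -- convexity of φ
  have hconv : ∀ (X Y : E) (a b : ℝ), 0 ≤ a → 0 ≤ b → a + b = 1 →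
      φ (a•X + b•Y) ≤ a*φ X + b*φ Y := by
    intro X Y a b ha hb hab
    have hv : v + (a•X + b•Y) = a•(v+X) + b•(v+Y) := by
      have : a•(v+X) + b•(v+Y) = (a+b)•v + (a•X + b•Y) := by
        simp [smul_add, add_smul]; abel
      rw [this, hab, one_smul]
    have hn : ‖v + (a•X + b•Y)‖ ≤ a*‖v+X‖ + b*‖v+Y‖ := by
      rw [hv]
      calc ‖a•(v+X) + b•(v+Y)‖ ≤ ‖a•(v+X)‖ + ‖b•(v+Y)‖ := norm_add_le _ _
        _ = a*‖v+X‖ + b*‖v+Y‖ := by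
          rw [norm_smul, norm_smul, Real.norm_eq_abs, Real.norm_eq_abs,
            abs_of_nonneg ha, abs_of_nonneg hb]
    have hsq : ‖v + (a•X + b•Y)‖^2 ≤ a*‖v+X‖^2 + b*‖v+Y‖^2 := by
      have h1 : ‖v + (a•X + b•Y)‖^2 ≤ (a*‖v+X‖ + b*‖v+Y‖)^2 :=
        pow_le_pow_left₀ (norm_nonneg _) hn 2
      have hb1 : b = 1 - a := by linarith
      subst hb1
      nlinarith [mul_nonneg (mul_nonneg ha hb) (sq_nonneg (‖v+X‖ - ‖v+Y‖))]
    have hψ : ψ (a•X + b•Y) = a * ψ X + b * ψ Y := by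
      rw [map_add, map_smul, map_smul]; rfl
    simp only [hφdef]
    rw [hψ]
    nlinarith
  -- three-point inequality
  have h3pt : ∀ (a b : E) (t s : ℝ), 0 < t → 0 < s →
      φ ((t*s/(t+s))•(a+b)) / (t*s/(t+s)) ≤ φ (t•a)/t + φ (s•b)/s := by
    intro a b t s ht hs
    set r := t*s/(t+s) with hrdef
    have hr : 0 < r := by positivity
    have hco : r/t + r/s = 1 := by rw [hrdef]; field_simp; ring
    have he : (r/t)•(t•a) + (r/s)•(s•b) = r•(a+b) := by
      rw [smul_smul, smul_smul, div_mul_cancel₀ _ ht.ne', div_mul_cancel₀ _ hs.ne', smul_add]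
    have hkey := hconv (t•a) (s•b) (r/t) (r/s) (by positivity) (by positivity) hco
    rw [he] at hkey
    rw [div_add_div _ _ ht.ne' hs.ne', div_le_div_iff₀ hr (by positivity)]
    calc φ (r•(a+b)) * (t*s) ≤ (r/t*φ (t•a) + r/s*φ (s•b)) * (t*s) :=
          mul_le_mul_of_nonneg_right hkey (by positivity)
      _ = (φ (t•a) * s + t * φ (s•b)) * r := by field_simp
  -- the sublinear functional p
  set pSet : E → Set ℝ := fun w => {z | ∃ t : ℝ, 0 < t ∧ ∃ a : E, z = φ (t•a)/t + δ*‖w-a‖}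
    with hpSetdef
  have hmem_self : ∀ w, φ w ∈ pSet w := by
    intro w
    exact ⟨1, one_pos, w, by simp⟩
  have hne : ∀ w, (pSet w).Nonempty := fun w => ⟨φ w, hmem_self w⟩
  have hφratio : ∀ (t : ℝ), 0 < t → ∀ a : E, -(δ*‖a‖) ≤ φ (t•a)/t := by
    intro t ht a
    rw [le_div_iff₀ ht]
    have := hφlb (t•a)
    rw [norm_smul, Real.norm_eq_abs, abs_of_pos ht] at this
    nlinarith
  have hlb : ∀ w, ∀ z ∈ pSet w, -(δ*‖w‖) ≤ z := by
    rintro w z ⟨t, ht, a, rfl⟩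
    have h1 := hφratio t ht a
    have h2 : ‖a‖ ≤ ‖w‖ + ‖w-a‖ := by
      calc ‖a‖ = ‖w - (w-a)‖ := by rw [sub_sub_cancel]
        _ ≤ ‖w‖ + ‖w-a‖ := norm_sub_le _ _
    have h3 : δ*‖a‖ ≤ δ*(‖w‖ + ‖w-a‖) := mul_le_mul_of_nonneg_left h2 hδ
    nlinarith
  have hbdd : ∀ w, BddBelow (pSet w) := fun w => ⟨-(δ*‖w‖), fun z hz => hlb w z hz⟩
  set p : E → ℝ := fun w => sInf (pSet w) with hpdef
  -- scaling membership helper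
  have hscale : ∀ (c : ℝ), 0 < c → ∀ w, ∀ z ∈ pSet w, c*z ∈ pSet (c•w) := by
    rintro c hc w z ⟨t, ht, a, rfl⟩
    refine ⟨t/c, by positivity, c•a, ?_⟩
    have h1 : (t/c)•(c•a) = t•a := by rw [smul_smul, div_mul_cancel₀ _ hc.ne']
    have h2 : ‖c•w - c•a‖ = c*‖w-a‖ := by
      rw [← smul_sub, norm_smul, Real.norm_eq_abs, abs_of_pos hc]
    rw [h1, h2, div_div_eq_mul_div]
    field_simp
  have hpSet_smul : ∀ (c : ℝ), 0 < c → ∀ w : E, pSet (c•w) = c • pSet w := by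
    intro c hc w
    ext z
    constructor
    · intro hz
      have := hscale c⁻¹ (by positivity) (c•w) z hz
      rw [inv_smul_smul₀ hc.ne'] at this
      exact ⟨c⁻¹*z, this, by show c * (c⁻¹ * z) = z; field_simp⟩
    · rintro ⟨y, hy, rfl⟩
      exact hscale c hc w y hy
  have N_hom : ∀ (c : ℝ), 0 < c → ∀ w : E, p (c•w) = c * p w := by
    intro c hc w
    simp only [hpdef]
    rw [hpSet_smul c hc w, Real.sInf_smul_of_nonneg hc.le, smul_eq_mul]
  have N_add : ∀ w₁ w₂ : E, p (w₁+w₂) ≤ p w₁ + p w₂ := by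
    intro w₁ w₂
    have claim : ∀ z₁ ∈ pSet w₁, ∀ z₂ ∈ pSet w₂, p (w₁+w₂) ≤ z₁ + z₂ := by
      rintro z₁ ⟨t, ht, a, rfl⟩ z₂ ⟨s, hs, b, rfl⟩
      have hr : (0:ℝ) < t*s/(t+s) := by positivity
      have hel : φ ((t*s/(t+s))•(a+b))/(t*s/(t+s)) + δ*‖(w₁+w₂)-(a+b)‖ ∈ pSet (w₁+w₂) :=
        ⟨t*s/(t+s), hr, a+b, rfl⟩
      have h1 : p (w₁+w₂) ≤ φ ((t*s/(t+s))•(a+b))/(t*s/(t+s)) + δ*‖(w₁+w₂)-(a+b)‖ :=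
        csInf_le (hbdd _) hel
      have h2 := h3pt a b t s ht hs
      have h3 : ‖(w₁+w₂)-(a+b)‖ ≤ ‖w₁-a‖ + ‖w₂-b‖ := by
        have he : (w₁+w₂)-(a+b) = (w₁-a) + (w₂-b) := by abel
        rw [he]
        exact norm_add_le _ _
      have h4 : δ*‖(w₁+w₂)-(a+b)‖ ≤ δ*(‖w₁-a‖ + ‖w₂-b‖) := mul_le_mul_of_nonneg_left h3 hδ
      nlinarith
    have step1 : ∀ z₂ ∈ pSet w₂, p (w₁+w₂) - z₂ ≤ p w₁ := by
      intro z₂ h₂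
      exact le_csInf (hne w₁) (fun z₁ h₁ => by linarith [claim z₁ h₁ z₂ h₂])
    have step2 : p (w₁+w₂) - p w₁ ≤ p w₂ :=
      le_csInf (hne w₂) (fun z₂ h₂ => by linarith [step1 z₂ h₂])
    linarith
  -- Hahn-Banach
  have hp0 : 0 ≤ p 0 := by
    apply le_csInf (hne 0)
    intro z hz
    have := hlb 0 z hz
    simpa using this
  obtain ⟨g, -, hg⟩ := exists_extension_of_le_sublinear ⟨⊥, 0⟩ p N_hom N_add (by
    rintro ⟨x, hx⟩
    rw [Submodule.mem_bot] at hx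
    subst hx
    simpa using hp0)
  have hgφ : ∀ w, g w ≤ φ w := fun w => (hg w).trans (csInf_le (hbdd w) (hmem_self w))
  have hgδ : ∀ w, g w ≤ δ*‖w‖ := by
    intro w
    refine (hg w).trans (csInf_le (hbdd w) ⟨1, one_pos, 0, ?_⟩)
    simp [hφ0]
  have habs : ∀ w, |g w| ≤ δ*‖w‖ := by
    intro w
    rw [abs_le]
    refine ⟨?_, hgδ w⟩
    have := hgδ (-w)
    rw [map_neg, norm_neg] at this
    linarith
  obtain ⟨m, hmval, hmnorm⟩ : ∃ m : StrongDual ℝ E, (∀ w, m w = g w) ∧ ‖m‖ ≤ δ := by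
    have hb : ∀ w, ‖g w‖ ≤ δ * ‖w‖ := fun w => by rw [Real.norm_eq_abs]; exact habs w
    exact ⟨LinearMap.mkContinuous g δ hb, fun w => rfl, LinearMap.mkContinuous_norm_le g hδ hb⟩
  set W : StrongDual ℝ E := m - ψ with hWdef
  have hW : ∀ w, W w ≤ 1/2*‖v+w‖^2 - 1/2*‖v‖^2 := by
    intro w
    have h1 := hgφ w
    rw [← hmval w] at h1
    simp only [hWdef, ContinuousLinearMap.sub_apply]
    simp only [hφdef] at h1
    linarith
  obtain ⟨hWv, hWnorm⟩ := dualitymap_of_subgrad W v hW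
  refine ⟨-W, ?_, ?_, ?_⟩
  · rw [ContinuousLinearMap.neg_apply, hWv]
  · rw [norm_neg, hWnorm]
  · have he : ψ - -W = m := by rw [hWdef]; abel
    rw [he]
    exact hmnorm

theorem stmt8 {E : Type*} [NormedAddCommGroup E] [NormedSpace ℝ E] [CompleteSpace E]
    (A : Set (E × StrongDual ℝ E)) (hA : RLDense A) :
    Dense (A - graNegJ E) := by
  rw [Metric.dense_iff]
  rintro ⟨y, y'⟩ r hr
  obtain ⟨q, hqA, hq⟩ := hA y y' (r^2/8) (by positivity)
  set x : E := q.1 - y with hxdef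
  set ψ : StrongDual ℝ E := q.2 - y' with hψdef
  simp only [rL] at hq
  have hψlb : ∀ u : E, -(‖ψ‖*‖u‖) ≤ ψ u := by
    intro u
    have h1 : |ψ u| ≤ ‖ψ‖*‖u‖ := by
      rw [← Real.norm_eq_abs]; exact ψ.le_opNorm u
    rw [abs_le] at h1
    linarith [h1.1]
  have hc : ∀ u : E, -(1/2*‖ψ‖^2) ≤ 1/2*‖u‖^2 + ψ u := by
    intro u
    have := hψlb u
    nlinarith [sq_nonneg (‖u‖ - ‖ψ‖)]
  have hcont : Continuous fun u : E => 1/2*‖u‖^2 + ψ u :=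
    (continuous_const.mul (continuous_norm.pow 2)).add ψ.continuous
  obtain ⟨v, hv1, hv2⟩ := my_ekeland (fun u : E => 1/2*‖u‖^2 + ψ u) hcont
    (-(1/2*‖ψ‖^2)) hc x (r^2/8) (r/2) (by positivity) (by beta_reduce; linarith)
  have hmin : ∀ u : E, 1/2*‖v‖^2 + ψ v ≤ 1/2*‖u‖^2 + ψ u + (r/2) * ‖u - v‖ := by
    intro u
    have := hv2 u
    beta_reduce at this
    rw [dist_eq_norm] at this
    linarith
  obtain ⟨g, hg1, hg2, hg3⟩ := my_subgrad ψ v (r/2) (by positivity) hmin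
  refine ⟨q - (v, g), ?_, Set.sub_mem_sub hqA (⟨hg1, hg2⟩ : (v, g) ∈ graNegJ E)⟩
  rw [Metric.mem_ball, Prod.dist_eq]
  have hfst : dist (q - (v, g)).1 y = ‖x - v‖ := by
    rw [Prod.fst_sub, dist_eq_norm]
    congr 1
    rw [hxdef]
    abel
  have hsnd : dist (q - (v, g)).2 y' = ‖ψ - g‖ := by
    rw [Prod.snd_sub, dist_eq_norm]
    congr 1
    rw [hψdef]
    abel
  have hdv : dist v x ≤ r/4 := by nlinarith
  apply max_lt
  · rw [hfst, ← dist_eq_norm, dist_comm]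
    calc dist v x ≤ r/4 := hdv
      _ < r := by linarith
  · rw [hsnd]
    calc ‖ψ - g‖ ≤ r/2 := hg3
      _ < r := by linarith
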